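/- Let B, C > 0, let q be a probability density on ℝ supported in [−B,B], and let p_T be a probability density on ℝ supported in [−C,C]. Extend F to α = 1 by F(1) = 0, where for α ∈ (0,1), F(α) = −∫_ℝ p_T(x) log H(α,x) dx. Then F is differentiable at α = 1 from within (0,1], with derivative F'(1) = (∫_ℝ ν q(ν) dν) · (∫_ℝ x p_T(x) dx), i.e. F'(1) equals the product of the mean of q and the mean of p_T. -/

import Mathlib

open MeasureTheory Real Filter
open scoped ENNReal Topology

/-- The correction factor `H(α,x) = ∫ ν, exp(-(1/(2α²))((1-α)² ν² - 2(1-α) x ν)) q(ν) dν`. -/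
noncomputable def Hfun (q : ℝ → ℝ) (α x : ℝ) : ℝ :=
  ∫ ν : ℝ, Real.exp (-(1 / (2 * α ^ 2)) * ((1 - α) ^ 2 * ν ^ 2 - 2 * (1 - α) * x * ν)) * q ν

/-- `F(α) = -∫ p_T(x) log H(α,x) dx` for `α ∈ (0,1)`, extended by `F(1) = 0`. -/
noncomputable def Ffun (q pT : ℝ → ℝ) (α : ℝ) : ℝ :=
  if α = 1 then 0 else -∫ x : ℝ, pT x * Real.log (Hfun q α x)

namespace St11

noncomputable def phiF (x α ν : ℝ) : ℝ :=
  -(1 / (2 * α ^ 2)) * ((1 - α) ^ 2 * ν ^ 2 - 2 * (1 - α) * x * ν)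

noncomputable def phiD (x α ν : ℝ) : ℝ :=
  (2 * ((1 - α) ^ 2 * ν ^ 2 - 2 * (1 - α) * x * ν)
    - α * (-2 * (1 - α) * ν ^ 2 + 2 * x * ν)) / (2 * α ^ 3)

noncomputable def HD (q : ℝ → ℝ) (α x : ℝ) : ℝ :=
  ∫ ν : ℝ, Real.exp (phiF x α ν) * phiD x α ν * q ν

lemma Hfun_eq (q : ℝ → ℝ) (α x : ℝ) :
    Hfun q α x = ∫ ν : ℝ, Real.exp (phiF x α ν) * q ν := rfl

lemma psi_bound {B C x α ν : ℝ} (hB : 0 < B) (hC : 0 < C)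
    (hx : |x| ≤ C) (hν : |ν| ≤ B) (hα : α ∈ Set.Icc (3/4 : ℝ) (5/4)) :
    |(1 - α) ^ 2 * ν ^ 2 - 2 * (1 - α) * x * ν| ≤ B^2/16 + C*B/2 := by
  have h1 : |1 - α| ≤ 1/4 := abs_le.mpr ⟨by linarith [hα.2], by linarith [hα.1]⟩
  have t1 : |(1 - α) ^ 2 * ν ^ 2| ≤ B^2/16 := by
    rw [abs_mul, abs_pow, abs_pow]
    have := mul_le_mul (pow_le_pow_left₀ (abs_nonneg _) h1 2)
      (pow_le_pow_left₀ (abs_nonneg _) hν 2) (by positivity) (by positivity)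
    nlinarith [this]
  have t2 : |2 * (1 - α) * x * ν| ≤ C*B/2 := by
    rw [abs_mul, abs_mul, abs_mul, abs_two]
    have h2 : 2 * |1 - α| ≤ 1/2 := by linarith
    have := mul_le_mul (mul_le_mul h2 hx (abs_nonneg x) (by norm_num)) hν (abs_nonneg ν)
      (by positivity)
    nlinarith [this]
  calc |(1 - α) ^ 2 * ν ^ 2 - 2 * (1 - α) * x * ν|
      ≤ |(1 - α) ^ 2 * ν ^ 2| + |2 * (1 - α) * x * ν| := abs_sub _ _
    _ ≤ B^2/16 + C*B/2 := add_le_add t1 t2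

lemma psid_bound {B C x α ν : ℝ} (hB : 0 < B) (hC : 0 < C)
    (hx : |x| ≤ C) (hν : |ν| ≤ B) (hα : α ∈ Set.Icc (3/4 : ℝ) (5/4)) :
    |(-2 * (1 - α) * ν ^ 2 + 2 * x * ν)| ≤ B^2/2 + 2*C*B := by
  have h1 : |1 - α| ≤ 1/4 := abs_le.mpr ⟨by linarith [hα.2], by linarith [hα.1]⟩
  have t1 : |(-2) * (1 - α) * ν ^ 2| ≤ B^2/2 := by
    rw [abs_mul, abs_mul, abs_neg, abs_two, abs_pow]
    have := mul_le_mul (by linarith : 2 * |1 - α| ≤ 1/2)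
      (pow_le_pow_left₀ (abs_nonneg _) hν 2) (by positivity) (by norm_num)
    nlinarith [this]
  have t2 : |2 * x * ν| ≤ 2*C*B := by
    rw [abs_mul, abs_mul, abs_two]
    have := mul_le_mul (mul_le_mul (le_refl (2:ℝ)) hx (abs_nonneg x) (by norm_num)) hν
      (abs_nonneg ν) (by positivity)
    nlinarith [this]
  calc |(-2 * (1 - α) * ν ^ 2 + 2 * x * ν)|
      ≤ |(-2) * (1 - α) * ν ^ 2| + |2 * x * ν| := by
        have := abs_add_le ((-2) * (1 - α) * ν ^ 2) (2 * x * ν)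
        convert this using 3
    _ ≤ B^2/2 + 2*C*B := add_le_add t1 t2

lemma phiF_bound {B C x α ν : ℝ} (hB : 0 < B) (hC : 0 < C)
    (hx : |x| ≤ C) (hν : |ν| ≤ B) (hα : α ∈ Set.Icc (3/4 : ℝ) (5/4)) :
    |phiF x α ν| ≤ B^2 + C*B + 1 := by
  have hα0 : (0:ℝ) < α := lt_of_lt_of_le (by norm_num) hα.1
  have hψ := psi_bound hB hC hx hν hα
  have h2 : (9:ℝ)/16 ≤ α^2 := by nlinarith [hα.1]
  rw [phiF, abs_mul, abs_neg, abs_of_pos (show (0:ℝ) < 1/(2*α^2) by positivity),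
    div_mul_eq_mul_div, one_mul, div_le_iff₀ (by positivity : (0:ℝ) < 2*α^2)]
  have hM : (0:ℝ) ≤ 2*(B^2 + C*B + 1) := by positivity
  nlinarith [mul_le_mul_of_nonneg_left h2 hM, mul_pos hB hC, sq_nonneg B]

lemma phiD_bound {B C x α ν : ℝ} (hB : 0 < B) (hC : 0 < C)
    (hx : |x| ≤ C) (hν : |ν| ≤ B) (hα : α ∈ Set.Icc (3/4 : ℝ) (5/4)) :
    |phiD x α ν| ≤ 8*(B^2 + C*B + 1) := by
  have hα0 : (0:ℝ) < α := lt_of_lt_of_le (by norm_num) hα.1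
  have hψ := psi_bound hB hC hx hν hα
  have hψd := psid_bound hB hC hx hν hα
  have h3 : (27:ℝ)/64 ≤ α^3 := by
    have := pow_le_pow_left₀ (by norm_num : (0:ℝ) ≤ 3/4) hα.1 3
    nlinarith [this]
  rw [phiD, abs_div, abs_of_pos (show (0:ℝ) < 2*α^3 by positivity),
    div_le_iff₀ (by positivity : (0:ℝ) < 2*α^3)]
  have tri : |2 * ((1 - α) ^ 2 * ν ^ 2 - 2 * (1 - α) * x * ν)
      - α * (-2 * (1 - α) * ν ^ 2 + 2 * x * ν)|
      ≤ 2 * |(1 - α) ^ 2 * ν ^ 2 - 2 * (1 - α) * x * ν|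
        + α * |(-2 * (1 - α) * ν ^ 2 + 2 * x * ν)| := by
    calc _ ≤ |2 * ((1 - α) ^ 2 * ν ^ 2 - 2 * (1 - α) * x * ν)|
          + |α * (-2 * (1 - α) * ν ^ 2 + 2 * x * ν)| := abs_sub _ _
      _ = _ := by rw [abs_mul, abs_mul, abs_two, abs_of_pos hα0]
  have hαd : α * |(-2 * (1 - α) * ν ^ 2 + 2 * x * ν)| ≤ (5/4) * (B^2/2 + 2*C*B) :=
    mul_le_mul hα.2 hψd (abs_nonneg _) (by norm_num)
  have hM : (0:ℝ) ≤ 16*(B^2 + C*B + 1) := by positivity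
  nlinarith [mul_le_mul_of_nonneg_left h3 hM, mul_pos hB hC, sq_nonneg B]

lemma hasDerivAt_phiF (x ν : ℝ) {α : ℝ} (hα : α ≠ 0) :
    HasDerivAt (fun a => phiF x a ν) (phiD x α ν) α := by
  have h2 : (2 * α ^ 2) ≠ 0 := by positivity
  have hbase : HasDerivAt (fun a : ℝ => 2 * a ^ 2) (4 * α) α := by
    have := (hasDerivAt_pow 2 α).const_mul (2:ℝ)
    convert this using 1
    · rfl
    · rfl
    simp; ring
  have h1 : HasDerivAt (fun a : ℝ => -(1 / (2 * a ^ 2))) (1 / α ^ 3) α := by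
    have := (hbase.inv h2).neg
    convert this using 1
    · rfl
    · rfl
    · funext a; rw [one_div]; rfl
    have e : -(-(4 * α) / (2 * α ^ 2) ^ 2) = (4 * α) / (2 * α ^ 2) ^ 2 := by ring
    rw [e, div_eq_div_iff (pow_ne_zero 3 hα) (pow_ne_zero 2 h2)]
    ring
  have hsub : HasDerivAt (fun a : ℝ => 1 - a) (-1) α := by
    simpa using (hasDerivAt_id α).const_sub 1
  have hg : HasDerivAt (fun a : ℝ => (1 - a) ^ 2 * ν ^ 2 - 2 * (1 - a) * x * ν)
      (-2 * (1 - α) * ν ^ 2 + 2 * x * ν) α := by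
    have t1 := (hsub.pow 2).mul_const (ν ^ 2)
    have t2 := ((hsub.const_mul 2).mul_const x).mul_const ν
    have := t1.sub t2
    convert this using 1
    · rfl
    · rfl
    · rfl
    ring
  have := h1.mul hg
  convert this using 1
  · rfl
  · rfl
  · rfl
  rw [phiD, div_eq_iff (by positivity : (2*α^3) ≠ 0)]
  field_simp
  ring

lemma ball_subset_Icc {α₀ α : ℝ} (hα₀ : α₀ ∈ Metric.ball (1:ℝ) (1/8))
    (hα : α ∈ Metric.ball α₀ (1/8)) : α ∈ Set.Icc (3/4 : ℝ) (5/4) := by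
  rw [Metric.mem_ball, Real.dist_eq] at hα₀ hα
  have : |α - 1| < 1/4 := by
    calc |α - 1| = |(α - α₀) + (α₀ - 1)| := by ring_nf
      _ ≤ |α - α₀| + |α₀ - 1| := abs_add_le _ _
      _ < 1/4 := by linarith
  have := abs_lt.mp this
  constructor <;> linarith [this.1, this.2]

lemma ball_mem_Icc {α : ℝ} (hα : α ∈ Metric.ball (1:ℝ) (1/8)) :
    α ∈ Set.Icc (3/4 : ℝ) (5/4) := by
  rw [Metric.mem_ball, Real.dist_eq] at hα
  have := abs_lt.mp hα
  constructor <;> linarith [this.1, this.2]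


section Meas

variable {B C : ℝ} {q : ℝ → ℝ}

lemma supp_abs {q : ℝ → ℝ} {B : ℝ} (hq_supp : Function.support q ⊆ Set.Icc (-B) B)
    {ν : ℝ} (h0 : q ν ≠ 0) : |ν| ≤ B := by
  have := hq_supp (Function.mem_support.mpr h0)
  exact abs_le.mpr ⟨this.1, this.2⟩

lemma exp_mul_bound (hB : 0 < B) (hC : 0 < C) (hq_nonneg : ∀ x, 0 ≤ q x)
    (hq_supp : Function.support q ⊆ Set.Icc (-B) B)
    {x : ℝ} (hx : |x| ≤ C) {α : ℝ} (hα : α ∈ Set.Icc (3/4:ℝ) (5/4)) (ν : ℝ) :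
    ‖Real.exp (phiF x α ν) * q ν‖ ≤ Real.exp (B^2 + C*B + 1) * q ν := by
  by_cases h0 : q ν = 0
  · simp [h0]
  · have hν := supp_abs hq_supp h0
    rw [Real.norm_eq_abs, abs_mul, abs_of_pos (Real.exp_pos _), abs_of_nonneg (hq_nonneg ν)]
    exact mul_le_mul_of_nonneg_right
      (Real.exp_le_exp.mpr ((le_abs_self _).trans (phiF_bound hB hC hx hν hα))) (hq_nonneg ν)

lemma DD_bound (hB : 0 < B) (hC : 0 < C) (hq_nonneg : ∀ x, 0 ≤ q x)
    (hq_supp : Function.support q ⊆ Set.Icc (-B) B)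
    {x : ℝ} (hx : |x| ≤ C) {α : ℝ} (hα : α ∈ Set.Icc (3/4:ℝ) (5/4)) (ν : ℝ) :
    ‖Real.exp (phiF x α ν) * phiD x α ν * q ν‖
      ≤ 8*(B^2 + C*B + 1) * Real.exp (B^2 + C*B + 1) * q ν := by
  by_cases h0 : q ν = 0
  · simp [h0]
  · have hν := supp_abs hq_supp h0
    rw [Real.norm_eq_abs, abs_mul, abs_mul, abs_of_pos (Real.exp_pos _),
      abs_of_nonneg (hq_nonneg ν)]
    have h1 : Real.exp (phiF x α ν) ≤ Real.exp (B^2 + C*B + 1) :=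
      Real.exp_le_exp.mpr ((le_abs_self _).trans (phiF_bound hB hC hx hν hα))
    have h2 := phiD_bound hB hC hx hν hα
    have := mul_le_mul h1 h2 (abs_nonneg _) (Real.exp_pos _).le
    calc Real.exp (phiF x α ν) * |phiD x α ν| * q ν
        ≤ (Real.exp (B^2 + C*B + 1) * (8*(B^2 + C*B + 1))) * q ν :=
          mul_le_mul_of_nonneg_right this (hq_nonneg ν)
      _ = 8*(B^2 + C*B + 1) * Real.exp (B^2 + C*B + 1) * q ν := by ring

lemma meas_exp_mul (hq_meas : Measurable q) (α x : ℝ) :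
    Measurable fun ν => Real.exp (phiF x α ν) * q ν :=
  ((by unfold phiF; fun_prop : Continuous fun ν => Real.exp (phiF x α ν)).measurable).mul hq_meas

lemma meas_DD (hq_meas : Measurable q) (α x : ℝ) :
    Measurable fun ν => Real.exp (phiF x α ν) * phiD x α ν * q ν :=
  ((by unfold phiF phiD; fun_prop :
    Continuous fun ν => Real.exp (phiF x α ν) * phiD x α ν).measurable).mul hq_meas

lemma int_exp_mul (hB : 0 < B) (hC : 0 < C) (hq_meas : Measurable q)
    (hq_nonneg : ∀ x, 0 ≤ q x) (hq_int : Integrable q)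
    (hq_supp : Function.support q ⊆ Set.Icc (-B) B)
    {x : ℝ} (hx : |x| ≤ C) {α : ℝ} (hα : α ∈ Set.Icc (3/4:ℝ) (5/4)) :
    Integrable fun ν => Real.exp (phiF x α ν) * q ν :=
  (hq_int.const_mul (Real.exp (B^2 + C*B + 1))).mono'
    (meas_exp_mul hq_meas α x).aestronglyMeasurable
    (ae_of_all _ (exp_mul_bound hB hC hq_nonneg hq_supp hx hα))

lemma Hfun_pos (hB : 0 < B) (hC : 0 < C) (hq_meas : Measurable q)
    (hq_nonneg : ∀ x, 0 ≤ q x) (hq_int : Integrable q) (hq_one : ∫ x, q x = 1)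
    (hq_supp : Function.support q ⊆ Set.Icc (-B) B)
    {x : ℝ} (hx : |x| ≤ C) {α : ℝ} (hα : α ∈ Set.Icc (3/4:ℝ) (5/4)) :
    Real.exp (-(B^2 + C*B + 1)) ≤ Hfun q α x := by
  rw [Hfun_eq]
  have h1 : ∫ ν : ℝ, Real.exp (-(B^2 + C*B + 1)) * q ν = Real.exp (-(B^2 + C*B + 1)) := by
    rw [integral_const_mul, hq_one, mul_one]
  rw [← h1]
  refine integral_mono (hq_int.const_mul _)
    (int_exp_mul hB hC hq_meas hq_nonneg hq_int hq_supp hx hα) (fun ν => ?_)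
  by_cases h0 : q ν = 0
  · simp [h0]
  · have hν := supp_abs hq_supp h0
    exact mul_le_mul_of_nonneg_right
      (Real.exp_le_exp.mpr ((neg_abs_le _).trans' (neg_le_neg (phiF_bound hB hC hx hν hα))))
      (hq_nonneg ν)

lemma inner_deriv (hB : 0 < B) (hC : 0 < C) (hq_meas : Measurable q)
    (hq_nonneg : ∀ x, 0 ≤ q x) (hq_int : Integrable q)
    (hq_supp : Function.support q ⊆ Set.Icc (-B) B)
    {x : ℝ} (hx : |x| ≤ C) {α₀ : ℝ} (hα₀ : α₀ ∈ Metric.ball (1:ℝ) (1/8)) :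
    HasDerivAt (fun α => Hfun q α x) (HD q α₀ x) α₀ := by
  have key := hasDerivAt_integral_of_dominated_loc_of_deriv_le (μ := volume) (x₀ := α₀)
    (s := Metric.ball α₀ (1/8))
    (F := fun α ν => Real.exp (phiF x α ν) * q ν)
    (F' := fun α ν => Real.exp (phiF x α ν) * phiD x α ν * q ν)
    (bound := fun ν => 8*(B^2 + C*B + 1) * Real.exp (B^2 + C*B + 1) * q ν)
    (Metric.ball_mem_nhds _ (by norm_num))
    (Eventually.of_forall fun α => (meas_exp_mul hq_meas α x).aestronglyMeasurable)
    (int_exp_mul hB hC hq_meas hq_nonneg hq_int hq_supp hx (ball_mem_Icc hα₀))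
    (meas_DD hq_meas α₀ x).aestronglyMeasurable
    (ae_of_all _ fun ν α hα =>
      DD_bound hB hC hq_nonneg hq_supp hx (ball_subset_Icc hα₀ hα) ν)
    (hq_int.const_mul _)
    (ae_of_all _ fun ν α hα => by
      have hIcc := ball_subset_Icc hα₀ hα
      have hα0 : α ≠ 0 := by
        have := hIcc.1; intro h; rw [h] at this; norm_num at this
      exact ((hasDerivAt_phiF x ν hα0).exp).mul_const (q ν))
  exact key.2

lemma meas_Hfun (hq_meas : Measurable q) (α : ℝ) : Measurable fun x => Hfun q α x := by
  have h : Measurable fun p : ℝ × ℝ => Real.exp (phiF p.1 α p.2) * q p.2 :=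
    ((by unfold phiF; fun_prop :
      Continuous fun p : ℝ × ℝ => Real.exp (phiF p.1 α p.2)).measurable).mul
      (hq_meas.comp measurable_snd)
  exact h.stronglyMeasurable.integral_prod_right'.measurable

lemma meas_HD (hq_meas : Measurable q) (α : ℝ) : Measurable fun x => HD q α x := by
  have h : Measurable fun p : ℝ × ℝ => Real.exp (phiF p.1 α p.2) * phiD p.1 α p.2 * q p.2 :=
    ((by unfold phiF phiD; fun_prop :
      Continuous fun p : ℝ × ℝ => Real.exp (phiF p.1 α p.2) * phiD p.1 α p.2).measurable).mul
      (hq_meas.comp measurable_snd)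
  exact h.stronglyMeasurable.integral_prod_right'.measurable

lemma HD_abs_le (hB : 0 < B) (hC : 0 < C) (hq_nonneg : ∀ x, 0 ≤ q x)
    (hq_int : Integrable q) (hq_one : ∫ x, q x = 1)
    (hq_supp : Function.support q ⊆ Set.Icc (-B) B)
    {x : ℝ} (hx : |x| ≤ C) {α : ℝ} (hα : α ∈ Set.Icc (3/4:ℝ) (5/4)) :
    |HD q α x| ≤ 8*(B^2 + C*B + 1) * Real.exp (B^2 + C*B + 1) := by
  have h := norm_integral_le_of_norm_le
    (hq_int.const_mul (8*(B^2 + C*B + 1) * Real.exp (B^2 + C*B + 1)))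
    (ae_of_all _ fun ν => DD_bound hB hC hq_nonneg hq_supp hx hα ν)
  rw [integral_const_mul, hq_one, mul_one] at h
  simpa [Real.norm_eq_abs, HD] using h

end Meas

end St11

/-- If `q` is a probability density supported in `[-B,B]` and `p_T` a probability density
supported in `[-C,C]`, then `F`, extended by `F(1) = 0`, is differentiable at `α = 1` from
within `(0,1]` with derivative `F'(1) = (∫ ν q(ν) dν)·(∫ x p_T(x) dx)`, the product of the
means of `q` and `p_T`. -/
theorem statement11 (B C : ℝ) (hB : 0 < B) (hC : 0 < C)
    (q : ℝ → ℝ) (hq_meas : Measurable q) (hq_nonneg : ∀ x, 0 ≤ q x)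
    (hq_one : ∫ x, q x = 1) (hq_supp : Function.support q ⊆ Set.Icc (-B) B)
    (pT : ℝ → ℝ) (hpT_meas : Measurable pT) (hpT_nonneg : ∀ x, 0 ≤ pT x)
    (hpT_one : ∫ x, pT x = 1) (hpT_supp : Function.support pT ⊆ Set.Icc (-C) C) :
    HasDerivWithinAt (Ffun q pT)
      ((∫ ν : ℝ, ν * q ν) * (∫ x : ℝ, x * pT x)) (Set.Ioc (0 : ℝ) 1) 1 := by
  open St11 in
  have hq_int : Integrable q := by
    by_contra h; rw [integral_undef h] at hq_one; norm_num at hq_one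
  have hpT_int : Integrable pT := by
    by_contra h; rw [integral_undef h] at hpT_one; norm_num at hpT_one
  have hH1 : ∀ x : ℝ, Hfun q 1 x = 1 := by
    intro x
    rw [Hfun_eq]
    have e : (fun ν : ℝ => Real.exp (St11.phiF x 1 ν) * q ν) = q := by
      funext ν; simp [St11.phiF]
    rw [e, hq_one]
  have hxC : ∀ {x : ℝ}, pT x ≠ 0 → |x| ≤ C := fun h => by
    have := hpT_supp (Function.mem_support.mpr h)
    exact abs_le.mpr ⟨this.1, this.2⟩
  have key := hasDerivAt_integral_of_dominated_loc_of_deriv_le (μ := volume) (x₀ := (1:ℝ))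
    (s := Metric.ball (1:ℝ) (1/8))
    (F := fun α x => pT x * Real.log (Hfun q α x))
    (F' := fun α x => pT x * (St11.HD q α x / Hfun q α x))
    (bound := fun x => pT x * (8*(B^2 + C*B + 1) * Real.exp (2*(B^2 + C*B + 1))))
    (Metric.ball_mem_nhds _ (by norm_num))
    (Eventually.of_forall fun α =>
      (hpT_meas.mul (Real.measurable_log.comp (meas_Hfun hq_meas α))).aestronglyMeasurable)
    (by
      have e : (fun x => pT x * Real.log (Hfun q 1 x)) = fun _ => (0:ℝ) :=
        funext fun x => by rw [hH1 x, Real.log_one, mul_zero]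
      show Integrable (fun x => pT x * Real.log (Hfun q 1 x)) volume
      rw [e]; exact integrable_zero _ _ _)
    ((hpT_meas.mul ((meas_HD hq_meas 1).div (meas_Hfun hq_meas 1))).aestronglyMeasurable)
    (ae_of_all _ fun x α hα => by
      by_cases hp0 : pT x = 0
      · simp [hp0]
      · have hx := hxC hp0
        have hIcc := ball_mem_Icc hα
        have hHlow := Hfun_pos hB hC hq_meas hq_nonneg hq_int hq_one hq_supp hx hIcc
        have hHpos : 0 < Hfun q α x := lt_of_lt_of_le (Real.exp_pos _) hHlow
        have hHD := HD_abs_le hB hC hq_nonneg hq_int hq_one hq_supp hx hIcc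
        rw [Real.norm_eq_abs, abs_mul, abs_of_nonneg (hpT_nonneg x)]
        refine mul_le_mul_of_nonneg_left ?_ (hpT_nonneg x)
        rw [abs_div, abs_of_pos hHpos]
        calc |St11.HD q α x| / Hfun q α x
            ≤ (8*(B^2 + C*B + 1) * Real.exp (B^2 + C*B + 1)) / Real.exp (-(B^2 + C*B + 1)) :=
              div_le_div₀ (by positivity) hHD (Real.exp_pos _) hHlow
          _ = 8*(B^2 + C*B + 1) * Real.exp (2*(B^2 + C*B + 1)) := by
              rw [Real.exp_neg, div_eq_mul_inv, inv_inv, mul_assoc, ← Real.exp_add, ← two_mul])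
    (hpT_int.mul_const _)
    (ae_of_all _ fun x α hα => by
      by_cases hp0 : pT x = 0
      · simp only [hp0, zero_mul]
        exact hasDerivAt_const _ _
      · have hx := hxC hp0
        have hH := inner_deriv hB hC hq_meas hq_nonneg hq_int hq_supp hx hα
        have hne : Hfun q α x ≠ 0 :=
          ne_of_gt (lt_of_lt_of_le (Real.exp_pos _)
            (Hfun_pos hB hC hq_meas hq_nonneg hq_int hq_one hq_supp hx (ball_mem_Icc hα)))
        exact (hH.log hne).const_mul (pT x))
  have hG := key.2
  have hHD1 : ∀ x : ℝ, St11.HD q 1 x = -x * ∫ ν : ℝ, ν * q ν := by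
    intro x
    have e : (fun ν : ℝ => Real.exp (St11.phiF x 1 ν) * St11.phiD x 1 ν * q ν)
        = fun ν : ℝ => (-x) * (ν * q ν) := by
      funext ν
      have e1 : St11.phiF x 1 ν = 0 := by simp [St11.phiF]
      have e2 : St11.phiD x 1 ν = -(x * ν) := by simp [St11.phiD]; ring
      rw [e1, e2, Real.exp_zero, one_mul]; ring
    show (∫ ν : ℝ, Real.exp (St11.phiF x 1 ν) * St11.phiD x 1 ν * q ν) = _
    rw [e, integral_const_mul]
  have hval : (∫ x : ℝ, pT x * (St11.HD q 1 x / Hfun q 1 x))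
      = -((∫ ν : ℝ, ν * q ν) * ∫ x : ℝ, x * pT x) := by
    have e : (fun x : ℝ => pT x * (St11.HD q 1 x / Hfun q 1 x))
        = fun x : ℝ => (-(∫ ν : ℝ, ν * q ν)) * (x * pT x) := by
      funext x
      rw [hH1 x, hHD1 x, div_one]
      ring
    rw [e, integral_const_mul]
    ring
  rw [hval] at hG
  have hFeq : Ffun q pT = fun α => -∫ x : ℝ, pT x * Real.log (Hfun q α x) := by
    funext α
    by_cases h : α = 1
    · subst h
      simp [Ffun, hH1]
    · simp [Ffun, h]
  rw [hFeq]
  have final := hG.neg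
  rw [neg_neg] at final
  exact final.hasDerivWithinAt
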